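/- For a faithful density matrix π (positive definite, trace one) on a finite-dimensional Hilbert space, the bilinear form ⟨A,B⟩ := Tr[A 𝕁(B)], where 𝕁(B) := ∫₀¹ π^s B π^{1-s} ds, is a real inner product on the space of self-adjoint matrices: it is linear in each argument, symmetric, and positive definite. -/

import Mathlib

open Matrix MeasureTheory ComplexOrder

/-- `mpow π hπ s` is the matrix power `π ^ s` for `s : ℝ`, defined via the spectral
decomposition of the Hermitian matrix `π`. -/
noncomputable def mpow {n : ℕ} (π : Matrix (Fin n) (Fin n) ℂ) (hπ : π.IsHermitian) (s : ℝ) :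
    Matrix (Fin n) (Fin n) ℂ :=
  (hπ.eigenvectorUnitary : Matrix (Fin n) (Fin n) ℂ) *
    Matrix.diagonal (fun i => ((hπ.eigenvalues i ^ s : ℝ) : ℂ)) *
    star (hπ.eigenvectorUnitary : Matrix (Fin n) (Fin n) ℂ)

/-- The logarithmic matrix mean `𝕁(B) = ∫₀¹ π^s B π^{1-s} ds`, defined entrywise. -/
noncomputable def Jmean {n : ℕ} (π : Matrix (Fin n) (Fin n) ℂ) (hπ : π.IsHermitian)
    (B : Matrix (Fin n) (Fin n) ℂ) : Matrix (Fin n) (Fin n) ℂ :=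
  Matrix.of fun i j => ∫ s in (0:ℝ)..1, (mpow π hπ s * B * mpow π hπ (1 - s)) i j

section aux
variable {n : ℕ} {π : Matrix (Fin n) (Fin n) ℂ}

/-- The weight `φ i j = ∫₀¹ λⱼ^s λᵢ^{1-s} ds`. -/
noncomputable def phi (h : π.IsHermitian) (i j : Fin n) : ℝ :=
  ∫ s in (0:ℝ)..1, h.eigenvalues j ^ s * h.eigenvalues i ^ (1 - s)

lemma rpow_cont (a : ℝ) (ha : 0 < a) : Continuous fun s : ℝ => a ^ s := by
  have : (fun s : ℝ => a ^ s) = fun s => Real.exp (Real.log a * s) := by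
    funext s; rw [Real.rpow_def_of_pos ha]
  rw [this]; exact Real.continuous_exp.comp (continuous_const.mul continuous_id)

lemma phi_cont (hπ : π.PosDef) (i j : Fin n) :
    Continuous fun s : ℝ => hπ.1.eigenvalues j ^ s * hπ.1.eigenvalues i ^ (1 - s) :=
  (rpow_cont _ (hπ.eigenvalues_pos j)).mul
    ((rpow_cont _ (hπ.eigenvalues_pos i)).comp (continuous_const.sub continuous_id))

lemma phi_pos (hπ : π.PosDef) (i j : Fin n) : 0 < phi hπ.1 i j := by
  refine intervalIntegral.intervalIntegral_pos_of_pos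
    ((phi_cont hπ i j).intervalIntegrable 0 1) (fun s => ?_) one_pos
  exact mul_pos (Real.rpow_pos_of_pos (hπ.eigenvalues_pos j) _)
    (Real.rpow_pos_of_pos (hπ.eigenvalues_pos i) _)

lemma phi_symm (hπ : π.PosDef) (i j : Fin n) : phi hπ.1 i j = phi hπ.1 j i := by
  unfold phi
  have := intervalIntegral.integral_comp_sub_left (a := 0) (b := 1)
    (fun t => hπ.1.eigenvalues j ^ (1 - t) * hπ.1.eigenvalues i ^ t) 1
  simp only [sub_self, sub_zero] at this
  calc (∫ s in (0:ℝ)..1, hπ.1.eigenvalues j ^ s * hπ.1.eigenvalues i ^ (1 - s))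
      = ∫ s in (0:ℝ)..1, hπ.1.eigenvalues j ^ (1 - (1 - s)) * hπ.1.eigenvalues i ^ (1 - s) := by
        refine intervalIntegral.integral_congr fun s _ => ?_
        norm_num
    _ = ∫ t in (0:ℝ)..1, hπ.1.eigenvalues j ^ (1 - t) * hπ.1.eigenvalues i ^ t := this
    _ = ∫ t in (0:ℝ)..1, hπ.1.eigenvalues i ^ t * hπ.1.eigenvalues j ^ (1 - t) := by
        exact intervalIntegral.integral_congr fun s _ => mul_comm _ _

/-- Pointwise trace identity: the trace of `A π^s B π^t` in the eigenbasis. -/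
lemma traceB (h : π.IsHermitian) (A B : Matrix (Fin n) (Fin n) ℂ) (s t : ℝ) :
    (A * (mpow π h s * B * mpow π h t)).trace
      = ∑ i, ∑ j, ((h.eigenvalues j ^ s : ℝ) : ℂ) * ((h.eigenvalues i ^ t : ℝ) : ℂ)
          * ((star (h.eigenvectorUnitary : Matrix (Fin n) (Fin n) ℂ) * A *
              (h.eigenvectorUnitary : Matrix (Fin n) (Fin n) ℂ)) i j)
          * ((star (h.eigenvectorUnitary : Matrix (Fin n) (Fin n) ℂ) * B *
              (h.eigenvectorUnitary : Matrix (Fin n) (Fin n) ℂ)) j i) := by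
  set U : Matrix (Fin n) (Fin n) ℂ := (h.eigenvectorUnitary : Matrix (Fin n) (Fin n) ℂ)
  set Ds : Matrix (Fin n) (Fin n) ℂ := Matrix.diagonal (fun i => ((h.eigenvalues i ^ s : ℝ) : ℂ))
  set Dt : Matrix (Fin n) (Fin n) ℂ := Matrix.diagonal (fun i => ((h.eigenvalues i ^ t : ℝ) : ℂ))
  have h1 : A * (mpow π h s * B * mpow π h t)
      = (A * U * Ds * star U * B * U * Dt) * star U := by
    unfold mpow; noncomm_ring
  have h2 : star U * (A * U * Ds * star U * B * U * Dt)
      = ((star U * A * U) * Ds) * ((star U * B * U) * Dt) := by noncomm_ring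
  rw [h1, Matrix.trace_mul_comm, h2]
  set X := star U * A * U with hX
  set Y := star U * B * U with hY
  simp only [Matrix.trace, Matrix.diag, Matrix.mul_apply, Ds, Dt, Matrix.diagonal_apply,
    mul_ite, ite_mul, mul_zero, zero_mul, Finset.sum_ite_eq, Finset.sum_ite_eq',
    Finset.mem_univ, if_true]
  refine Finset.sum_congr rfl fun i _ => Finset.sum_congr rfl fun j _ => by ring

lemma mpow_cont (hπ : π.PosDef) : Continuous fun s : ℝ => mpow π hπ.1 s := by
  unfold mpow
  refine Continuous.matrix_mul (Continuous.matrix_mul continuous_const ?_) continuous_const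
  exact Continuous.matrix_diagonal (continuous_pi fun i =>
    Complex.continuous_ofReal.comp (rpow_cont _ (hπ.eigenvalues_pos i)))

lemma integrand_cont (hπ : π.PosDef) (B : Matrix (Fin n) (Fin n) ℂ) (i j : Fin n) :
    Continuous fun s : ℝ => (mpow π hπ.1 s * B * mpow π hπ.1 (1 - s)) i j := by
  refine Continuous.matrix_elem ?_ i j
  exact Continuous.matrix_mul ((mpow_cont hπ).matrix_mul continuous_const)
    ((mpow_cont hπ).comp (continuous_const.sub continuous_id))

/-- Key formula: `Tr[A 𝕁(B)] = ∑ᵢⱼ φᵢⱼ Ãᵢⱼ B̃ⱼᵢ` where `Ã = U* A U`. -/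
lemma key (hπ : π.PosDef) (A B : Matrix (Fin n) (Fin n) ℂ) :
    (A * Jmean π hπ.1 B).trace
      = ∑ i, ∑ j, ((phi hπ.1 i j : ℝ) : ℂ)
          * ((star (hπ.1.eigenvectorUnitary : Matrix (Fin n) (Fin n) ℂ) * A *
              (hπ.1.eigenvectorUnitary : Matrix (Fin n) (Fin n) ℂ)) i j)
          * ((star (hπ.1.eigenvectorUnitary : Matrix (Fin n) (Fin n) ℂ) * B *
              (hπ.1.eigenvectorUnitary : Matrix (Fin n) (Fin n) ℂ)) j i) := by
  set U : Matrix (Fin n) (Fin n) ℂ := (hπ.1.eigenvectorUnitary : Matrix (Fin n) (Fin n) ℂ)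
    with hU
  set tA := star U * A * U with htA
  set tB := star U * B * U with htB
  have hcont : ∀ i j : Fin n,
      Continuous fun s : ℝ => A i j * (mpow π hπ.1 s * B * mpow π hπ.1 (1 - s)) j i :=
    fun i j => continuous_const.mul (integrand_cont hπ B j i)
  calc (A * Jmean π hπ.1 B).trace
      = ∑ i, ∑ j, A i j * ∫ s in (0:ℝ)..1, (mpow π hπ.1 s * B * mpow π hπ.1 (1 - s)) j i := by
        simp [Matrix.trace, Matrix.diag, Matrix.mul_apply, Jmean]
    _ = ∑ i, ∑ j, ∫ s in (0:ℝ)..1, A i j * (mpow π hπ.1 s * B * mpow π hπ.1 (1 - s)) j i := by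
        simp_rw [intervalIntegral.integral_const_mul]
    _ = ∫ s in (0:ℝ)..1, ∑ i, ∑ j, A i j * (mpow π hπ.1 s * B * mpow π hπ.1 (1 - s)) j i := by
        rw [intervalIntegral.integral_finset_sum (fun i _ =>
          (continuous_finset_sum _ fun j _ => hcont i j).intervalIntegrable 0 1)]
        exact Finset.sum_congr rfl fun i _ =>
          (intervalIntegral.integral_finset_sum fun j _ =>
            (hcont i j).intervalIntegrable 0 1).symm
    _ = ∫ s in (0:ℝ)..1, ∑ i, ∑ j,
          ((hπ.1.eigenvalues j ^ s : ℝ) : ℂ) * ((hπ.1.eigenvalues i ^ (1 - s) : ℝ) : ℂ)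
            * tA i j * tB j i := by
        refine intervalIntegral.integral_congr fun s _ => ?_
        calc ∑ i, ∑ j, A i j * (mpow π hπ.1 s * B * mpow π hπ.1 (1 - s)) j i
            = (A * (mpow π hπ.1 s * B * mpow π hπ.1 (1 - s))).trace := by
              simp [Matrix.trace, Matrix.diag, Matrix.mul_apply]
          _ = _ := traceB hπ.1 A B s (1 - s)
    _ = ∑ i, ∑ j, ((phi hπ.1 i j : ℝ) : ℂ) * tA i j * tB j i := by
        have hcont2 : ∀ i j : Fin n, Continuous fun s : ℝ =>
            ((hπ.1.eigenvalues j ^ s : ℝ) : ℂ) * ((hπ.1.eigenvalues i ^ (1 - s) : ℝ) : ℂ)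
              * tA i j * tB j i := fun i j =>
          (((Complex.continuous_ofReal.comp (rpow_cont _ (hπ.eigenvalues_pos j))).mul
            (Complex.continuous_ofReal.comp ((rpow_cont _ (hπ.eigenvalues_pos i)).comp
              (continuous_const.sub continuous_id)))).mul continuous_const).mul continuous_const
        rw [intervalIntegral.integral_finset_sum (fun i _ =>
          (continuous_finset_sum _ fun j _ => hcont2 i j).intervalIntegrable 0 1)]
        refine Finset.sum_congr rfl fun i _ => ?_
        rw [intervalIntegral.integral_finset_sum (fun j _ =>
          (hcont2 i j).intervalIntegrable 0 1)]
        refine Finset.sum_congr rfl fun j _ => ?_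
        have hfun : (fun s : ℝ =>
            ((hπ.1.eigenvalues j ^ s : ℝ) : ℂ) * ((hπ.1.eigenvalues i ^ (1 - s) : ℝ) : ℂ)
              * tA i j * tB j i)
            = fun s : ℝ =>
              ((hπ.1.eigenvalues j ^ s * hπ.1.eigenvalues i ^ (1 - s) : ℝ) : ℂ)
                * (tA i j * tB j i) := by
          funext s; push_cast; ring
        rw [hfun, intervalIntegral.integral_mul_const, intervalIntegral.integral_ofReal]
        rw [phi]; ring

end aux

/-- For a faithful density matrix `π`, the bilinear form `⟨A,B⟩ = Tr[A 𝕁(B)]` is a real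
inner product on self-adjoint matrices: real-linear in the first argument, symmetric,
real-valued and positive definite on Hermitian matrices. -/
theorem stmt0 {n : ℕ} (π : Matrix (Fin n) (Fin n) ℂ) (hπ : π.PosDef) (htr : π.trace = 1) :
    (∀ (A B C : Matrix (Fin n) (Fin n) ℂ), A.IsHermitian → B.IsHermitian → C.IsHermitian →
      ∀ c : ℝ, ((((c : ℂ) • A + B) * Jmean π hπ.1 C).trace) =
        (c : ℂ) * (A * Jmean π hπ.1 C).trace + (B * Jmean π hπ.1 C).trace) ∧
    (∀ (A B C : Matrix (Fin n) (Fin n) ℂ), A.IsHermitian → B.IsHermitian → C.IsHermitian →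
      ∀ c : ℝ, ((A * Jmean π hπ.1 ((c : ℂ) • B + C)).trace) =
        (c : ℂ) * (A * Jmean π hπ.1 B).trace + (A * Jmean π hπ.1 C).trace) ∧
    (∀ (A B : Matrix (Fin n) (Fin n) ℂ), A.IsHermitian → B.IsHermitian →
      (A * Jmean π hπ.1 B).trace = (B * Jmean π hπ.1 A).trace) ∧
    (∀ (A : Matrix (Fin n) (Fin n) ℂ), A.IsHermitian →
      ((A * Jmean π hπ.1 A).trace.im = 0 ∧
        (0 ≤ (A * Jmean π hπ.1 A).trace.re) ∧ (A ≠ 0 → 0 < (A * Jmean π hπ.1 A).trace.re))) := by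
  refine ⟨?_, ?_, ?_, ?_⟩
  · intro A B C _ _ _ c
    simp [Matrix.add_mul, Matrix.smul_mul, Matrix.trace_add, Matrix.trace_smul, smul_eq_mul]
  · intro A B C _ _ _ c
    rw [key hπ A ((c : ℂ) • B + C), key hπ A B, key hπ A C]
    have hexp : ∀ j i : Fin n,
        (star (hπ.1.eigenvectorUnitary : Matrix (Fin n) (Fin n) ℂ) * ((c : ℂ) • B + C) *
            (hπ.1.eigenvectorUnitary : Matrix (Fin n) (Fin n) ℂ)) j i
          = (c : ℂ) * (star (hπ.1.eigenvectorUnitary : Matrix (Fin n) (Fin n) ℂ) * B *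
              (hπ.1.eigenvectorUnitary : Matrix (Fin n) (Fin n) ℂ)) j i
            + (star (hπ.1.eigenvectorUnitary : Matrix (Fin n) (Fin n) ℂ) * C *
              (hπ.1.eigenvectorUnitary : Matrix (Fin n) (Fin n) ℂ)) j i := by
      intro j i
      simp [Matrix.mul_add, Matrix.add_mul, Matrix.mul_smul, Matrix.smul_mul,
        Matrix.add_apply, Matrix.smul_apply, smul_eq_mul]
    simp only [Finset.mul_sum, ← Finset.sum_add_distrib]
    refine Finset.sum_congr rfl fun i _ => Finset.sum_congr rfl fun j _ => by
      rw [hexp]; ring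
  · intro A B _ _
    rw [key hπ A B, key hπ B A, Finset.sum_comm]
    refine Finset.sum_congr rfl fun i _ => Finset.sum_congr rfl fun j _ => ?_
    rw [phi_symm hπ]; ring
  · intro A hA
    set U : Matrix (Fin n) (Fin n) ℂ := (hπ.1.eigenvectorUnitary : Matrix (Fin n) (Fin n) ℂ)
      with hU
    set tA := star U * A * U with htAdef
    have htA : tA.IsHermitian := by
      rw [htAdef, Matrix.star_eq_conjTranspose]
      exact Matrix.isHermitian_conjTranspose_mul_mul U hA
    set S : ℝ := ∑ i, ∑ j, phi hπ.1 i j * Complex.normSq (tA i j) with hS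
    have hval : (A * Jmean π hπ.1 A).trace = (S : ℂ) := by
      rw [key hπ A A]
      have hterm : ∀ i j : Fin n, ((phi hπ.1 i j : ℝ) : ℂ) * tA i j * tA j i
          = ((phi hπ.1 i j * Complex.normSq (tA i j) : ℝ) : ℂ) := by
        intro i j
        rw [← htA.apply j i, mul_assoc]
        simp only [RCLike.star_def]
        rw [Complex.mul_conj]
        push_cast; ring
      calc ∑ i, ∑ j, ((phi hπ.1 i j : ℝ) : ℂ) * tA i j * tA j i
          = ∑ i, ∑ j, ((phi hπ.1 i j * Complex.normSq (tA i j) : ℝ) : ℂ) := by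
            exact Finset.sum_congr rfl fun i _ => Finset.sum_congr rfl fun j _ => hterm i j
        _ = (S : ℂ) := by rw [hS]; push_cast; rfl
    have hSnn : 0 ≤ S :=
      Finset.sum_nonneg fun i _ => Finset.sum_nonneg fun j _ =>
        mul_nonneg (phi_pos hπ i j).le (Complex.normSq_nonneg _)
    refine ⟨by rw [hval]; exact Complex.ofReal_im _, by rw [hval]; simpa using hSnn, ?_⟩
    intro hA0
    rw [hval]
    have hUU : U * star U = 1 := by
      have := hπ.1.eigenvectorUnitary.2
      exact this.2
    have htA0 : tA ≠ 0 := by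
      intro h0
      apply hA0
      have hback : U * tA * star U = A := by
        rw [htAdef]
        calc U * (star U * A * U) * star U = (U * star U) * A * (U * star U) := by noncomm_ring
          _ = A := by rw [hUU, one_mul, mul_one]
      rw [← hback, h0, mul_zero, zero_mul]
    obtain ⟨i, j, hij⟩ : ∃ i j, tA i j ≠ 0 := by
      by_contra hcon
      push_neg at hcon
      exact htA0 (by ext i j; simpa using hcon i j)
    have hpos : 0 < S := by
      refine Finset.sum_pos' (fun a _ => Finset.sum_nonneg fun b _ =>
        mul_nonneg (phi_pos hπ a b).le (Complex.normSq_nonneg _)) ⟨i, Finset.mem_univ i, ?_⟩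
      refine Finset.sum_pos' (fun b _ =>
        mul_nonneg (phi_pos hπ i b).le (Complex.normSq_nonneg _)) ⟨j, Finset.mem_univ j, ?_⟩
      exact mul_pos (phi_pos hπ i j) (Complex.normSq_pos.mpr hij)
    simpa using hpos
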